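/- If real numbers a,b,c,d (pairwise distinct) and polynomial values p(a),p(b),p(c),p(d) (all nonzero) satisfy the four secant relations p(a)/p(b) = (c-a)/(c-b), p(b)/p(c) = (d-b)/(d-c), p(c)/p(d) = (a-c)/(a-d), p(d)/p(a) = (b-d)/(b-a), then the cross ratio λ = ((c-a)(d-b))/((c-b)(d-a)) satisfies λ² = 1 - λ, hence λ = (-1+√5)/2 or λ = (-1-√5)/2. -/

import Mathlib

/-- If pairwise distinct reals `a,b,c,d` and nonzero values `Pa,Pb,Pc,Pd` satisfy the four
secant relations, then the cross ratio `λ = ((c-a)(d-b))/((c-b)(d-a))` satisfies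
`λ² = 1 - λ`, hence `λ = (-1+√5)/2` or `λ = (-1-√5)/2`. -/
theorem secant_four_cycle_crossRatio (a b c d Pa Pb Pc Pd : ℝ)
    (hab : a ≠ b) (hac : a ≠ c) (had : a ≠ d) (hbc : b ≠ c) (hbd : b ≠ d) (hcd : c ≠ d)
    (hPa : Pa ≠ 0) (hPb : Pb ≠ 0) (hPc : Pc ≠ 0) (hPd : Pd ≠ 0)
    (h1 : Pa / Pb = (c - a) / (c - b))
    (h2 : Pb / Pc = (d - b) / (d - c))
    (h3 : Pc / Pd = (a - c) / (a - d))
    (h4 : Pd / Pa = (b - d) / (b - a)) :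
    (((c - a) * (d - b)) / ((c - b) * (d - a))) ^ 2
        = 1 - ((c - a) * (d - b)) / ((c - b) * (d - a)) ∧
      (((c - a) * (d - b)) / ((c - b) * (d - a)) = (-1 + Real.sqrt 5) / 2 ∨
        ((c - a) * (d - b)) / ((c - b) * (d - a)) = (-1 - Real.sqrt 5) / 2) := by
  have hcb : c - b ≠ 0 := sub_ne_zero.mpr (Ne.symm hbc)
  have hdc : d - c ≠ 0 := sub_ne_zero.mpr (Ne.symm hcd)
  have hda : d - a ≠ 0 := sub_ne_zero.mpr (Ne.symm had)
  have hba : b - a ≠ 0 := sub_ne_zero.mpr (Ne.symm hab)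
  have had' : a - d ≠ 0 := sub_ne_zero.mpr had
  have e1 : Pa * (c - b) = (c - a) * Pb := (div_eq_div_iff hPb hcb).1 h1
  have e2 : Pb * (d - c) = (d - b) * Pc := (div_eq_div_iff hPc hdc).1 h2
  have e3 : Pc * (a - d) = (a - c) * Pd := (div_eq_div_iff hPd had').1 h3
  have e4 : Pd * (b - a) = (b - d) * Pa := (div_eq_div_iff hPa hba).1 h4
  have key : ((c - a) * (d - b)) ^ 2
      = ((c - b) * (d - a)) ^ 2 - ((c - a) * (d - b)) * ((c - b) * (d - a)) := by
    have h5 : (c - b) * (d - c) * (a - d) * (b - a) * (Pa * Pb * Pc * Pd)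
        = ((c - a) * (d - b)) ^ 2 * (Pa * Pb * Pc * Pd) := by
      have := congrArg₂ (· * ·) (congrArg₂ (· * ·) (congrArg₂ (· * ·) e1 e2) e3) e4
      ring_nf at this ⊢
      linarith [this]
    have hP : Pa * Pb * Pc * Pd ≠ 0 := by positivity
    have h6 : (c - b) * (d - c) * (a - d) * (b - a) = ((c - a) * (d - b)) ^ 2 :=
      mul_right_cancel₀ hP h5
    nlinarith [h6]
  have hden : (c - b) * (d - a) ≠ 0 := mul_ne_zero hcb hda
  have hl : (((c - a) * (d - b)) / ((c - b) * (d - a))) ^ 2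
      = 1 - ((c - a) * (d - b)) / ((c - b) * (d - a)) := by
    field_simp
    linear_combination key
  refine ⟨hl, ?_⟩
  set l := ((c - a) * (d - b)) / ((c - b) * (d - a)) with hldef
  have h5 : Real.sqrt 5 ^ 2 = 5 := Real.sq_sqrt (by norm_num)
  have hz : (2 * l + 1 - Real.sqrt 5) * (2 * l + 1 + Real.sqrt 5) = 0 := by
    nlinarith [hl, h5]
  rcases mul_eq_zero.1 hz with h | h
  · left; linarith
  · right; linarith
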